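/- arXiv:1303.4609 — 3 statements merged into one kernel-verified Lean document; each statement's English description precedes it below -/
import Mathlib

section
/- Let m and s be integers with 1 ≤ s ≤ m − 1. Then the function H_s is integrable on the punctured unit ball {t ∈ ℝ^m : 0 < ‖t‖ < 1} with respect to Lebesgue measure. -/
open MeasureTheory

/-- The kernel `H_s(t) = (∏_{i=1}^s (|t_i| + ‖t‖²))⁻¹ · ‖t‖^{-(m-s-1)}` on `ℝ^m`. -/
noncomputable def Hker (m s : ℕ) (t : EuclideanSpace ℝ (Fin m)) : ℝ :=
  ((∏ i ∈ Finset.univ.filter (fun i : Fin m => (i : ℕ) < s), (|t i| + ‖t‖ ^ 2)) *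
    ‖t‖ ^ (m - s - 1))⁻¹

open Real Set Finset


namespace HkerAux


lemma abs_coord_le_norm {m : ℕ} (t : EuclideanSpace ℝ (Fin m)) (i : Fin m) :
    |t i| ≤ ‖t‖ := by
  rw [EuclideanSpace.norm_eq]
  have h1 : |t i| = Real.sqrt (‖t i‖ ^ 2) := by
    rw [Real.sqrt_sq_eq_abs, abs_norm, Real.norm_eq_abs]
  rw [h1]
  apply Real.sqrt_le_sqrt
  exact Finset.single_le_sum (f := fun j => ‖t j‖ ^ 2)
    (fun j _ => sq_nonneg _) (Finset.mem_univ i)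

lemma amgm {x y a : ℝ} (hx : 0 ≤ x) (hy : 0 ≤ y) (ha : 0 ≤ a) (ha1 : a ≤ 1) :
    x ^ a * y ^ (1 - a) ≤ x + y := by
  have h := Real.geom_mean_le_arith_mean2_weighted (w₁ := a) (w₂ := 1 - a) ha (by linarith) hx hy (by ring)
  nlinarith [mul_nonneg (by linarith : (0:ℝ) ≤ 1 - a) hx, mul_nonneg ha hy]

lemma oneDim {r : ℝ} (hr : -1 < r) :
    IntegrableOn (fun x : ℝ => |x| ^ r) (Ioo (-1 : ℝ) 1) := by
  have h1 : IntegrableOn (fun x : ℝ => |x| ^ r) (Ioo (0:ℝ) 1) := by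
    refine ((intervalIntegral.integrableOn_Ioo_rpow_iff one_pos).2 hr).congr_fun ?_ measurableSet_Ioo
    intro x hx
    simp only []
    rw [abs_of_pos hx.1]
  have mp : MeasurePreserving (fun x : ℝ => -x) volume volume :=
    Measure.measurePreserving_neg _
  have emb : MeasurableEmbedding (fun x : ℝ => -x) :=
    (Homeomorph.neg ℝ).measurableEmbedding
  have h2 := (mp.integrableOn_comp_preimage emb).2 h1
  have hpre : (fun x : ℝ => -x) ⁻¹' Ioo 0 1 = Ioo (-1:ℝ) 0 := by
    ext x
    simp only [Set.mem_preimage, Set.mem_Ioo]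
    constructor
    · rintro ⟨h1', h2'⟩; constructor <;> linarith
    · rintro ⟨h1', h2'⟩; constructor <;> linarith
  rw [hpre] at h2
  have h2' : IntegrableOn (fun x : ℝ => |x| ^ r) (Ioo (-1:ℝ) 0) := by
    refine h2.congr_fun ?_ measurableSet_Ioo
    intro x _
    simp [Function.comp, abs_neg]
  have h3 := h2'.union h1
  refine h3.congr_set_ae ?_
  rw [Filter.eventuallyEq_set]
  have h0 : (volume : Measure ℝ) {(0:ℝ)} = 0 := Real.volume_singleton
  filter_upwards [measure_eq_zero_iff_ae_notMem.mp h0] with x hx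
  simp only [Set.mem_singleton_iff] at hx
  simp only [Set.mem_Ioo, Set.mem_union]
  constructor
  · rintro ⟨ha, hb⟩
    rcases lt_or_gt_of_ne hx with h | h
    · exact Or.inl ⟨ha, h⟩
    · exact Or.inr ⟨h, hb⟩
  · rintro (⟨ha, hb⟩ | ⟨ha, hb⟩) <;> constructor <;> linarith

lemma card_filter_lt (m s : ℕ) (h : s ≤ m) :
    (Finset.univ.filter (fun i : Fin m => (i : ℕ) < s)).card = s := by
  have heq : Finset.univ.filter (fun i : Fin m => (i : ℕ) < s) =
      Finset.map (Fin.castLEEmb h) Finset.univ := by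
    ext j
    simp only [Finset.mem_filter, Finset.mem_univ, true_and, Finset.mem_map,
      Fin.castLEEmb]
    constructor
    · intro hj
      exact ⟨⟨(j : ℕ), hj⟩, by ext; simp [Fin.castLEEmb]⟩
    · rintro ⟨a, rfl⟩
      simpa [Fin.castLEEmb] using a.2
  rw [heq, Finset.card_map, Finset.card_univ, Fintype.card_fin]


noncomputable def alpha (m s : ℕ) (i : Fin m) : ℝ :=
  if (i : ℕ) < s then 1 - (4 * (s : ℝ))⁻¹ else ((m : ℝ) - s - 2⁻¹) / ((m : ℝ) - s)

lemma alpha_lt_one {m s : ℕ} (hs : 1 ≤ s) (hsm : s + 1 ≤ m) (i : Fin m) :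
    alpha m s i < 1 := by
  have hs' : (1:ℝ) ≤ s := by exact_mod_cast hs
  have hm' : (s:ℝ) + 1 ≤ m := by exact_mod_cast hsm
  have hms : (0:ℝ) < (m:ℝ) - s := by linarith
  rw [alpha]
  split_ifs
  · have : (0:ℝ) < (4 * (s:ℝ))⁻¹ := by positivity
    linarith
  · rw [div_lt_one hms]; linarith

lemma alpha_nonneg {m s : ℕ} (hs : 1 ≤ s) (hsm : s + 1 ≤ m) (i : Fin m) :
    0 ≤ alpha m s i := by
  have hs' : (1:ℝ) ≤ s := by exact_mod_cast hs
  have hm' : (s:ℝ) + 1 ≤ m := by exact_mod_cast hsm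
  have hms : (0:ℝ) < (m:ℝ) - s := by linarith
  rw [alpha]
  split_ifs
  · have : (4 * (s:ℝ))⁻¹ ≤ 1 := by
      rw [inv_le_one_iff₀]; right; linarith
    linarith
  · apply div_nonneg _ hms.le; linarith

lemma bound (m s : ℕ) (hs : 1 ≤ s) (hsm : s + 1 ≤ m)
    (t : EuclideanSpace ℝ (Fin m)) (ht : ∀ i, t i ≠ 0) :
    Hker m s t ≤ ∏ i : Fin m, |t i| ^ (-(alpha m s i)) := by
  have hs' : (1:ℝ) ≤ s := by exact_mod_cast hs
  have hm' : (s:ℝ) + 1 ≤ m := by exact_mod_cast hsm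
  have hms : (0:ℝ) < (m:ℝ) - s := by linarith
  set a : ℝ := 1 - (4 * (s : ℝ))⁻¹ with ha_def
  set b : ℝ := ((m : ℝ) - s - 2⁻¹) / ((m : ℝ) - s) with hb_def
  have hinv_pos : (0:ℝ) < (4 * (s:ℝ))⁻¹ := by positivity
  have hinv_le : (4 * (s:ℝ))⁻¹ ≤ 1 := by rw [inv_le_one_iff₀]; right; linarith
  have ha0 : 0 ≤ a := by rw [ha_def]; linarith
  have ha1 : a ≤ 1 := by rw [ha_def]; linarith
  have hb0 : 0 ≤ b := div_nonneg (by linarith) hms.le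
  have htne : t ≠ 0 := by
    intro h
    exact ht ⟨0, by omega⟩ (by rw [h]; rfl)
  have hn : 0 < ‖t‖ := norm_pos_iff.mpr htne
  set head := Finset.univ.filter (fun i : Fin m => (i : ℕ) < s) with hhead
  set tail := Finset.univ.filter (fun i : Fin m => ¬ (i : ℕ) < s) with htail
  have hcard : head.card = s := card_filter_lt m s (by omega)
  have hcard' : tail.card = m - s := by
    have := Finset.card_filter_add_card_filter_not
      (s := (Finset.univ : Finset (Fin m))) (p := fun i : Fin m => (i : ℕ) < s)
    rw [← hhead, ← htail, Finset.card_univ, Fintype.card_fin, hcard] at this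
    omega
  -- Step 1: AM-GM on each head factor
  have hstep1 : ∀ i ∈ head, |t i| ^ a * ‖t‖ ^ (2 * (1 - a)) ≤ |t i| + ‖t‖ ^ 2 := by
    intro i _
    have h := amgm (abs_nonneg (t i)) (sq_nonneg ‖t‖) ha0 ha1
    have h2 : ((‖t‖ ^ 2 : ℝ)) ^ (1 - a) = ‖t‖ ^ (2 * (1 - a)) := by
      rw [← Real.rpow_natCast ‖t‖ 2, ← Real.rpow_mul hn.le]
      norm_num
    rwa [h2] at h
  have hprod1 : (∏ i ∈ head, |t i| ^ a) * ‖t‖ ^ (2 * (1 - a) * (s : ℝ))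
      ≤ ∏ i ∈ head, (|t i| + ‖t‖ ^ 2) := by
    have hle := Finset.prod_le_prod
      (f := fun i => |t i| ^ a * ‖t‖ ^ (2 * (1 - a)))
      (g := fun i => |t i| + ‖t‖ ^ 2)
      (fun i _ => mul_nonneg (Real.rpow_nonneg (abs_nonneg _) _)
        (Real.rpow_nonneg hn.le _)) hstep1
    calc (∏ i ∈ head, |t i| ^ a) * ‖t‖ ^ (2 * (1 - a) * (s : ℝ))
        = ∏ i ∈ head, (|t i| ^ a * ‖t‖ ^ (2 * (1 - a))) := by
          rw [Finset.prod_mul_distrib, Finset.prod_const, hcard,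
            ← Real.rpow_natCast (‖t‖ ^ (2 * (1 - a))) s, ← Real.rpow_mul hn.le]
      _ ≤ _ := hle
  -- Step 2: tail
  have hprod2 : (∏ i ∈ tail, |t i| ^ b) ≤ ‖t‖ ^ (b * ((m : ℝ) - s)) := by
    calc (∏ i ∈ tail, |t i| ^ b) ≤ ∏ _i ∈ tail, ‖t‖ ^ b :=
          Finset.prod_le_prod (fun i _ => Real.rpow_nonneg (abs_nonneg _) b)
            (fun i _ => Real.rpow_le_rpow (abs_nonneg _) (abs_coord_le_norm t i) hb0)
      _ = ‖t‖ ^ (b * ((m : ℝ) - s)) := by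
          rw [Finset.prod_const, hcard',
            ← Real.rpow_natCast (‖t‖ ^ b) (m - s), ← Real.rpow_mul hn.le]
          congr 1
          rw [Nat.cast_sub (by omega : s ≤ m)]
  -- exponent arithmetic
  have hKey : ‖t‖ ^ (2 * (1 - a) * (s : ℝ)) * ‖t‖ ^ (((m - s - 1 : ℕ) : ℝ))
      = ‖t‖ ^ (b * ((m : ℝ) - s)) := by
    rw [← Real.rpow_add hn]
    congr 1
    have e2 : ((m - s - 1 : ℕ) : ℝ) = (m : ℝ) - s - 1 := by
      rw [Nat.sub_sub, Nat.cast_sub (by omega : s + 1 ≤ m)]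
      push_cast; ring
    rw [e2, ha_def, hb_def, div_mul_cancel₀ _ hms.ne']
    have hss : (s:ℝ) ≠ 0 := by linarith
    field_simp
    ring
  set P : ℝ := (∏ i ∈ head, |t i| ^ a) * ∏ i ∈ tail, |t i| ^ b with hP
  have hheadnn : 0 ≤ ∏ i ∈ head, |t i| ^ a :=
    Finset.prod_nonneg fun i _ => Real.rpow_nonneg (abs_nonneg _) _
  have hP_le : P ≤ (∏ i ∈ head, (|t i| + ‖t‖ ^ 2)) * ‖t‖ ^ (m - s - 1) := by
    calc P ≤ (∏ i ∈ head, |t i| ^ a) * ‖t‖ ^ (b * ((m : ℝ) - s)) :=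
          mul_le_mul_of_nonneg_left hprod2 hheadnn
      _ = ((∏ i ∈ head, |t i| ^ a) * ‖t‖ ^ (2 * (1 - a) * (s : ℝ)))
            * ‖t‖ ^ (((m - s - 1 : ℕ) : ℝ)) := by rw [← hKey]; ring
      _ ≤ (∏ i ∈ head, (|t i| + ‖t‖ ^ 2)) * ‖t‖ ^ (((m - s - 1 : ℕ) : ℝ)) :=
          mul_le_mul_of_nonneg_right hprod1 (Real.rpow_nonneg hn.le _)
      _ = (∏ i ∈ head, (|t i| + ‖t‖ ^ 2)) * ‖t‖ ^ (m - s - 1) := by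
          rw [Real.rpow_natCast]
  have hP_pos : 0 < P := by
    apply mul_pos <;>
      exact Finset.prod_pos fun i _ => Real.rpow_pos_of_pos (abs_pos.mpr (ht i)) _
  have hRHS : (∏ i : Fin m, |t i| ^ (-(alpha m s i))) = P⁻¹ := by
    rw [← Finset.prod_filter_mul_prod_filter_not Finset.univ
      (fun i : Fin m => (i : ℕ) < s) (fun i => |t i| ^ (-(alpha m s i)))]
    rw [hP, mul_inv, ← Finset.prod_inv_distrib, ← Finset.prod_inv_distrib]
    rw [← hhead, ← htail]
    congr 1
    · refine Finset.prod_congr rfl fun i hi => ?_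
      rw [hhead] at hi
      rw [alpha, if_pos (Finset.mem_filter.mp hi).2, Real.rpow_neg (abs_nonneg _)]
    · refine Finset.prod_congr rfl fun i hi => ?_
      rw [htail] at hi
      rw [alpha, if_neg (Finset.mem_filter.mp hi).2, Real.rpow_neg (abs_nonneg _)]
  rw [hRHS, Hker]
  rw [← hhead]
  exact inv_anti₀ hP_pos hP_le


end HkerAux


section Final
open HkerAux

/-- For `1 ≤ s ≤ m - 1`, the kernel `H_s` is integrable on the punctured unit ball of `ℝ^m`. -/
theorem Hker_integrableOn_puncturedBall (m s : ℕ) (hs : 1 ≤ s) (hsm : s + 1 ≤ m) :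
    IntegrableOn (Hker m s)
      {t : EuclideanSpace ℝ (Fin m) | 0 < ‖t‖ ∧ ‖t‖ < 1} volume := by
  set S : Set (EuclideanSpace ℝ (Fin m)) := {t | 0 < ‖t‖ ∧ ‖t‖ < 1} with hSdef
  have hS : MeasurableSet S := by
    have : S = {t : EuclideanSpace ℝ (Fin m) | 0 < ‖t‖} ∩ {t | ‖t‖ < 1} := by
      ext t; simp [hSdef, Set.mem_setOf_eq]
    rw [this]
    exact ((isOpen_lt continuous_const continuous_norm).measurableSet).inter
      ((isOpen_lt continuous_norm continuous_const).measurableSet)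
  -- the dominating product function
  set g : Fin m → ℝ → ℝ :=
    fun i => Set.indicator (Ioo (-1 : ℝ) 1) (fun x => |x| ^ (-(alpha m s i))) with hg_def
  have hg : ∀ i, Integrable (g i) volume := by
    intro i
    rw [hg_def]
    refine (integrable_indicator_iff measurableSet_Ioo).2 (oneDim ?_)
    have := alpha_lt_one hs hsm i
    linarith
  have hFpi : Integrable (fun x : Fin m → ℝ => ∏ i, g i (x i)) volume :=
    Integrable.fintype_prod (𝕜 := ℝ) hg
  have hmp := EuclideanSpace.volume_preserving_symm_measurableEquiv_toLp (Fin m)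
  have hFe : Integrable (fun t : EuclideanSpace ℝ (Fin m) => ∏ i, g i (t i)) volume := by
    have := (hmp.integrable_comp_emb
      (MeasurableEquiv.toLp 2 (Fin m → ℝ)).symm.measurableEmbedding).2 hFpi
    exact this
  -- measurability of the kernel
  have hco : ∀ i, Measurable fun t : EuclideanSpace ℝ (Fin m) => t i := fun i =>
    (EuclideanSpace.proj (𝕜 := ℝ) i).continuous.measurable
  have hHm : Measurable (Hker m s) := by
    apply Measurable.inv
    apply Measurable.mul
    · exact Finset.measurable_prod _ fun i _ =>
        ((hco i).abs.add (measurable_norm.pow_const 2))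
    · exact measurable_norm.pow_const _
  -- null set of vanishing coordinates
  have hnull : ∀ i : Fin m, volume {t : EuclideanSpace ℝ (Fin m) | t i = 0} = 0 := by
    intro i
    have hset : {t : EuclideanSpace ℝ (Fin m) | t i = 0} =
        (LinearMap.ker ((EuclideanSpace.proj (𝕜 := ℝ) i :
          EuclideanSpace ℝ (Fin m) →L[ℝ] ℝ) :
          EuclideanSpace ℝ (Fin m) →ₗ[ℝ] ℝ) : Set (EuclideanSpace ℝ (Fin m))) := by
      ext t
      simp [LinearMap.mem_ker]
    rw [hset]
    apply Measure.addHaar_submodule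
    intro hker
    have h1 : EuclideanSpace.single i (1 : ℝ) ∈
        LinearMap.ker ((EuclideanSpace.proj (𝕜 := ℝ) i :
          EuclideanSpace ℝ (Fin m) →L[ℝ] ℝ) :
          EuclideanSpace ℝ (Fin m) →ₗ[ℝ] ℝ) := hker ▸ Submodule.mem_top
    simp [LinearMap.mem_ker, EuclideanSpace.single_apply] at h1
  have hae : ∀ᵐ t : EuclideanSpace ℝ (Fin m) ∂volume, ∀ i, t i ≠ 0 := by
    rw [ae_all_iff]
    intro i
    rw [ae_iff]
    convert hnull i using 2
    simp
  refine Integrable.mono' hFe.integrableOn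
    (hHm.aestronglyMeasurable.restrict) ?_
  filter_upwards [ae_restrict_mem hS, ae_restrict_of_ae hae] with t htS htne
  have hb := bound m s hs hsm t htne
  have heq : (∏ i, g i (t i)) = ∏ i, |t i| ^ (-(alpha m s i)) := by
    refine Finset.prod_congr rfl fun i _ => ?_
    have hmem : t i ∈ Ioo (-1 : ℝ) 1 := by
      have h1 := abs_coord_le_norm t i
      have h2 : |t i| < 1 := lt_of_le_of_lt h1 htS.2
      exact abs_lt.mp h2
    rw [hg_def]
    simp [Set.indicator_of_mem hmem]
  have hnonneg : 0 ≤ Hker m s t := by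
    rw [Hker]
    positivity
  rw [Real.norm_eq_abs, abs_of_nonneg hnonneg, heq]
  exact hb

end Final
end

section
/- Let m and s be integers with 1 ≤ s ≤ m − 1. Then ∫_{{t ∈ ℝ^m : ‖t‖ < ε}} H_s(t) dt tends to 0 as ε tends to 0 from the right. -/
open MeasureTheory

open Set

section Aux

/-- `x ↦ |x|^(-c)` (with indicator of `(-ε, ε)`) is integrable for `c < 1`. -/
lemma integrable_indicator_abs_rpow {c ε : ℝ} (hc1 : c < 1) (hε : 0 < ε) :
    Integrable ((Set.Ioo (-ε) ε).indicator fun x : ℝ => |x| ^ (-c)) := by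
  rw [integrable_indicator_iff measurableSet_Ioo]
  have hpos : IntegrableOn (fun x : ℝ => |x| ^ (-c)) (Ioo 0 ε) := by
    refine ((intervalIntegral.integrableOn_Ioo_rpow_iff hε).2
      (by linarith : (-1:ℝ) < -c)).congr_fun ?_ measurableSet_Ioo
    intro x hx
    simp [abs_of_pos hx.1]
  have hneg : IntegrableOn (fun x : ℝ => |x| ^ (-c)) (Ioo (-ε) 0) := by
    have A : MeasurableEmbedding (fun x : ℝ => -x) :=
      (Homeomorph.neg ℝ).measurableEmbedding
    have : IntegrableOn (fun x : ℝ => |x| ^ (-c)) (Ioo (-ε) 0)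
        (Measure.map (fun x : ℝ => -x) volume) := by
      rw [A.integrableOn_map_iff]
      have hpre : (fun x : ℝ => -x) ⁻¹' Ioo (-ε) 0 = Ioo 0 ε := by
        ext x
        simp only [mem_preimage, mem_Ioo]
        constructor
        · rintro ⟨h1, h2⟩; constructor <;> linarith
        · rintro ⟨h1, h2⟩; constructor <;> linarith
      rw [hpre]
      simpa [Function.comp_def, abs_neg] using hpos
    rwa [Measure.map_neg_eq_self (volume : Measure ℝ)] at this
  have h0 : IntegrableOn (fun x : ℝ => |x| ^ (-c)) {(0:ℝ)} := by
    rw [IntegrableOn, Measure.restrict_eq_zero.mpr (by simp)]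
    exact integrable_zero_measure
  refine ((hneg.union (h0.union hpos)).mono_set ?_)
  intro x hx
  rcases lt_trichotomy x 0 with h | h | h
  · exact Or.inl ⟨hx.1, h⟩
  · exact Or.inr (Or.inl h)
  · exact Or.inr (Or.inr ⟨h, hx.2⟩)

lemma integral_indicator_abs_rpow {c ε : ℝ} (hc1 : c < 1) (hε : 0 < ε) :
    ∫ x, (Set.Ioo (-ε) ε).indicator (fun x : ℝ => |x| ^ (-c)) x
      = 2 * (ε ^ (1 - c) / (1 - c)) := by
  have key : ∀ x : ℝ, (Set.Ioo (-ε) ε).indicator (fun x : ℝ => |x| ^ (-c)) x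
      = (Set.Ico 0 ε).indicator (fun y : ℝ => y ^ (-c)) |x| := by
    intro x
    simp only [Set.indicator_apply, Set.mem_Ioo, Set.mem_Ico, abs_nonneg, true_and, ← abs_lt]
  simp_rw [key]
  rw [integral_comp_abs (f := (Set.Ico 0 ε).indicator (fun y : ℝ => y ^ (-c)))]
  rw [setIntegral_indicator measurableSet_Ico]
  have hset : Ioi (0:ℝ) ∩ Ico 0 ε = Ioo 0 ε := by
    ext x
    simp only [mem_inter_iff, mem_Ioi, mem_Ico, mem_Ioo]
    exact ⟨fun h => ⟨h.1, h.2.2⟩, fun h => ⟨h.1, h.1.le, h.2⟩⟩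
  rw [hset, ← integral_Ioc_eq_integral_Ioo, ← intervalIntegral.integral_of_le hε.le,
    integral_rpow (Or.inl (by linarith)), Real.zero_rpow (by linarith)]
  rw [show -c + 1 = 1 - c by ring]
  ring

lemma abs_coord_le_norm {m : ℕ} (t : EuclideanSpace ℝ (Fin m)) (i : Fin m) :
    |t i| ≤ ‖t‖ := by
  rw [EuclideanSpace.norm_eq]
  have h1 : |t i| = Real.sqrt (‖t i‖ ^ 2) := by
    rw [Real.sqrt_sq_eq_abs, Real.norm_eq_abs, abs_abs]
  rw [h1]
  exact Real.sqrt_le_sqrt (Finset.single_le_sum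
    (fun j _ => sq_nonneg ‖t j‖) (Finset.mem_univ i))

lemma card_filter_coe_lt {m s : ℕ} (h : s < m) :
    (Finset.univ.filter fun i : Fin m => (i : ℕ) < s).card = s := by
  have : (Finset.univ.filter fun i : Fin m => (i : ℕ) < s)
      = Finset.Iio (⟨s, h⟩ : Fin m) := by
    ext i
    simp [Fin.lt_def]
  rw [this, Fin.card_Iio]

lemma volume_coord_zero (m : ℕ) (i : Fin m) :
    volume {t : EuclideanSpace ℝ (Fin m) | t i = 0} = 0 := by
  have h : {t : EuclideanSpace ℝ (Fin m) | t i = 0} =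
      (LinearMap.ker ((EuclideanSpace.proj i :
        EuclideanSpace ℝ (Fin m) →L[ℝ] ℝ) : EuclideanSpace ℝ (Fin m) →ₗ[ℝ] ℝ) : Set _) := by
    ext t
    simp [LinearMap.mem_ker]
  rw [h]
  refine Measure.addHaar_submodule _ _ ?_
  intro htop
  have h1 : EuclideanSpace.single i (1:ℝ) ∈ LinearMap.ker ((EuclideanSpace.proj i :
      EuclideanSpace ℝ (Fin m) →L[ℝ] ℝ) : EuclideanSpace ℝ (Fin m) →ₗ[ℝ] ℝ) := by
    rw [htop]; trivial
  simp [LinearMap.mem_ker, EuclideanSpace.single_apply] at h1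

/-- The exponent `θ` used for the first `s` coordinates. -/
noncomputable def thExp (s : ℕ) : ℝ := 1 - 1 / (4 * s)
/-- The exponent `b` used for the remaining coordinates. -/
noncomputable def bExp (m s : ℕ) : ℝ := ((m : ℝ) - s - 1/2) / ((m : ℝ) - s)
/-- The exponent profile `c`. -/
noncomputable def cExp (m s : ℕ) (i : Fin m) : ℝ := if (i : ℕ) < s then thExp s else bExp m s

section exps
variable {m s : ℕ} (hs : 1 ≤ s) (hsm : s + 1 ≤ m)
include hs

lemma thExp_nonneg : 0 ≤ thExp s := by
  have h1 : (1:ℝ) ≤ s := by exact_mod_cast hs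
  have : 1 / (4 * (s:ℝ)) ≤ 1 := by
    rw [div_le_one (by linarith)]; linarith
  unfold thExp; linarith

lemma thExp_lt_one : thExp s < 1 := by
  have h1 : (1:ℝ) ≤ s := by exact_mod_cast hs
  have : 0 < 1 / (4 * (s:ℝ)) := by positivity
  unfold thExp; linarith

include hsm
lemma bExp_nonneg : 0 ≤ bExp m s := by
  have h1 : (s:ℝ) + 1 ≤ m := by exact_mod_cast hsm
  unfold bExp
  apply div_nonneg <;> linarith

lemma bExp_lt_one : bExp m s < 1 := by
  have h1 : (s:ℝ) + 1 ≤ m := by exact_mod_cast hsm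
  rw [bExp, div_lt_one (by linarith)]; linarith

lemma cExp_nonneg (i : Fin m) : 0 ≤ cExp m s i := by
  unfold cExp; split
  · exact thExp_nonneg hs
  · exact bExp_nonneg hs hsm

lemma cExp_lt_one (i : Fin m) : cExp m s i < 1 := by
  unfold cExp; split
  · exact thExp_lt_one hs
  · exact bExp_lt_one hs hsm
end exps

lemma Hker_nonneg (m s : ℕ) (t : EuclideanSpace ℝ (Fin m)) : 0 ≤ Hker m s t := by
  unfold Hker
  apply inv_nonneg.2
  apply mul_nonneg
  · exact Finset.prod_nonneg fun i _ => add_nonneg (abs_nonneg _) (sq_nonneg _)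
  · positivity

/-- The key pointwise bound: away from the coordinate hyperplanes,
`H_s(t) ≤ ∏ i, |t i| ^ (-c i)` with all exponents `c i < 1`. -/
lemma Hker_le_prod (m s : ℕ) (hs : 1 ≤ s) (hsm : s + 1 ≤ m)
    (t : EuclideanSpace ℝ (Fin m)) (ht : ∀ i, t i ≠ 0) :
    Hker m s t ≤ ∏ i, |t i| ^ (-(cExp m s i)) := by
  have hm2 : 2 ≤ m := by omega
  set θ := thExp s with hθdef
  set b := bExp m s with hbdef
  have hθ0 : 0 ≤ θ := thExp_nonneg hs
  have hθ1 : θ < 1 := thExp_lt_one hs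
  have hb0 : 0 ≤ b := bExp_nonneg hs hsm
  have hS1 : (1:ℝ) ≤ s := by exact_mod_cast hs
  have hM : (s:ℝ) + 1 ≤ m := by exact_mod_cast hsm
  have htne : t ≠ 0 := by
    intro h0
    exact ht ⟨0, by omega⟩ (by rw [h0]; rfl)
  set r := ‖t‖ with hrdef
  have hr : 0 < r := norm_pos_iff.2 htne
  have hr2 : 0 < r ^ 2 := by positivity
  set A := Finset.univ.filter (fun i : Fin m => (i : ℕ) < s) with hA
  set P := ∏ i ∈ A, (|t i| + r ^ 2) with hP
  have hsplit : ∏ i, |t i| ^ (cExp m s i)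
      = (∏ i ∈ A, |t i| ^ θ) *
        (∏ i ∈ Finset.univ.filter (fun i : Fin m => ¬ (i : ℕ) < s), |t i| ^ b) := by
    rw [← Finset.prod_filter_mul_prod_filter_not Finset.univ (fun i : Fin m => (i : ℕ) < s)]
    congr 1
    · refine Finset.prod_congr rfl fun i hi => ?_
      have hi' := hi
      rw [hA, Finset.mem_filter] at hi'
      simp [cExp, hi'.2, hθdef]
    · refine Finset.prod_congr rfl fun i hi => ?_
      rw [Finset.mem_filter] at hi
      simp [cExp, hi.2, hbdef]
  have step1 : ∀ i : Fin m, |t i| ^ θ ≤ (|t i| + r ^ 2) * (r ^ 2) ^ (θ - 1) := by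
    intro i
    have amgm : |t i| ^ θ * (r ^ 2) ^ (1 - θ) ≤ |t i| + r ^ 2 := by
      refine (Real.geom_mean_le_arith_mean2_weighted hθ0 (by linarith) (abs_nonneg _)
        hr2.le (by ring)).trans ?_
      nlinarith [abs_nonneg (t i), hr2.le]
    calc |t i| ^ θ = (|t i| ^ θ * (r ^ 2) ^ (1 - θ)) * (r ^ 2) ^ (θ - 1) := by
          rw [mul_assoc, ← Real.rpow_add hr2]
          norm_num
      _ ≤ (|t i| + r ^ 2) * (r ^ 2) ^ (θ - 1) :=
          mul_le_mul_of_nonneg_right amgm (Real.rpow_nonneg hr2.le _)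
  have cardA : A.card = s := card_filter_coe_lt (by omega)
  have cardAc : (Finset.univ.filter (fun i : Fin m => ¬ (i : ℕ) < s)).card = m - s := by
    have := Finset.card_filter_add_card_filter_not (s := (Finset.univ : Finset (Fin m)))
      (p := fun i : Fin m => (i : ℕ) < s)
    rw [← hA] at this
    rw [Finset.card_univ, Fintype.card_fin, cardA] at this
    omega
  have step2 : ∏ i ∈ A, |t i| ^ θ ≤ P * ((r ^ 2) ^ (θ - 1)) ^ s := by
    calc ∏ i ∈ A, |t i| ^ θ ≤ ∏ i ∈ A, ((|t i| + r ^ 2) * (r ^ 2) ^ (θ - 1)) :=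
          Finset.prod_le_prod (fun i _ => Real.rpow_nonneg (abs_nonneg _) _)
            (fun i _ => step1 i)
      _ = P * ((r ^ 2) ^ (θ - 1)) ^ s := by
          rw [Finset.prod_mul_distrib, Finset.prod_const, cardA]
  have step3 : ∏ i ∈ Finset.univ.filter (fun i : Fin m => ¬ (i : ℕ) < s), |t i| ^ b
      ≤ (r ^ b) ^ (m - s) := by
    calc ∏ i ∈ Finset.univ.filter (fun i : Fin m => ¬ (i : ℕ) < s), |t i| ^ b
        ≤ ∏ i ∈ Finset.univ.filter (fun i : Fin m => ¬ (i : ℕ) < s), r ^ b :=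
          Finset.prod_le_prod (fun i _ => Real.rpow_nonneg (abs_nonneg _) _)
            (fun i _ => Real.rpow_le_rpow (abs_nonneg _) (abs_coord_le_norm t i) hb0)
      _ = (r ^ b) ^ (m - s) := by rw [Finset.prod_const, cardAc]
  have step4 : ((r ^ 2) ^ (θ - 1)) ^ s * (r ^ b) ^ (m - s) = r ^ (m - s - 1) := by
    have e1 : (r:ℝ) ^ (2:ℕ) = r ^ (2:ℝ) := (Real.rpow_natCast r 2).symm
    rw [e1, ← Real.rpow_mul hr.le, ← Real.rpow_natCast (r ^ (2 * (θ - 1))) s,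
      ← Real.rpow_natCast (r ^ b) (m - s), ← Real.rpow_mul hr.le, ← Real.rpow_mul hr.le,
      ← Real.rpow_add hr]
    have hms : ((m - s : ℕ) : ℝ) = (m : ℝ) - s := by
      rw [Nat.cast_sub (by omega)]
    have hms1 : ((m - s - 1 : ℕ) : ℝ) = (m : ℝ) - s - 1 := by
      rw [Nat.cast_sub (by omega), Nat.cast_sub (by omega)]; norm_num
    have hexp : 2 * (θ - 1) * (s:ℝ) + b * ((m - s : ℕ) : ℝ) = ((m - s - 1 : ℕ) : ℝ) := by
      rw [hms, hms1, hθdef, hbdef, thExp, bExp]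
      have h1 : (s:ℝ) ≠ 0 := by linarith
      have h2 : (m:ℝ) - s ≠ 0 := by linarith
      field_simp
      ring
    rw [hexp, Real.rpow_natCast]
  have hposL : 0 < ∏ i, |t i| ^ (cExp m s i) :=
    Finset.prod_pos fun i _ => Real.rpow_pos_of_pos (abs_pos.2 (ht i)) _
  have main : ∏ i, |t i| ^ (cExp m s i) ≤ P * r ^ (m - s - 1) := by
    rw [hsplit, ← step4, ← mul_assoc]
    exact mul_le_mul step2 step3
      (Finset.prod_nonneg fun i _ => Real.rpow_nonneg (abs_nonneg _) _)
      (by positivity)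
  have final : Hker m s t ≤ (∏ i, |t i| ^ (cExp m s i))⁻¹ := by
    unfold Hker
    exact inv_anti₀ hposL main
  refine final.trans ?_
  rw [← Finset.prod_inv_distrib]
  refine le_of_eq (Finset.prod_congr rfl fun i _ => ?_).symm
  rw [Real.rpow_neg (abs_nonneg _)]

end Aux

/-- For `1 ≤ s ≤ m - 1`, the integral of `H_s` over the ball of radius `ε` tends to `0` as
`ε → 0⁺`. -/
theorem tendsto_integral_Hker_ball (m s : ℕ) (hs : 1 ≤ s) (hsm : s + 1 ≤ m) :
    Filter.Tendsto
      (fun ε : ℝ => ∫ t in {t : EuclideanSpace ℝ (Fin m) | ‖t‖ < ε}, Hker m s t)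
      (nhdsWithin 0 (Set.Ioi 0)) (nhds 0) := by
  have hm0 : m ≠ 0 := by omega
  have hc0 : ∀ i : Fin m, 0 ≤ cExp m s i := cExp_nonneg hs hsm
  have hc1 : ∀ i : Fin m, cExp m s i < 1 := cExp_lt_one hs hsm
  set F : ℝ → ℝ := fun ε => ∏ i : Fin m, (2 * (ε ^ (1 - cExp m s i) / (1 - cExp m s i)))
    with hF
  have hFlim : Filter.Tendsto F (nhdsWithin 0 (Set.Ioi 0)) (nhds 0) := by
    have hfac : ∀ i : Fin m, i ∈ Finset.univ → Filter.Tendsto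
        (fun ε : ℝ => 2 * (ε ^ (1 - cExp m s i) / (1 - cExp m s i)))
        (nhdsWithin (0:ℝ) (Set.Ioi 0)) (nhds 0) := by
      intro i _
      have h1 : Filter.Tendsto (fun ε : ℝ => ε ^ (1 - cExp m s i))
          (nhdsWithin (0:ℝ) (Set.Ioi 0)) (nhds 0) := by
        have hca : ContinuousAt (fun ε : ℝ => ε ^ (1 - cExp m s i)) 0 :=
          Real.continuousAt_rpow_const 0 _ (Or.inr (by linarith [hc1 i]))
        have h := hca.tendsto
        rw [Real.zero_rpow (by linarith [hc1 i] : (1:ℝ) - cExp m s i ≠ 0)] at h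
        exact h.mono_left nhdsWithin_le_nhds
      have h2 := (h1.div_const (1 - cExp m s i)).const_mul 2
      simpa using h2
    have hprod := tendsto_finset_prod Finset.univ hfac
    rw [hF]
    simpa [Finset.prod_const, Finset.card_univ, zero_pow hm0] using hprod
  have hlow : ∀ ε : ℝ,
      0 ≤ ∫ t in {t : EuclideanSpace ℝ (Fin m) | ‖t‖ < ε}, Hker m s t := by
    intro ε
    exact integral_nonneg fun t => Hker_nonneg m s t
  have hup : ∀ ε ∈ Set.Ioi (0:ℝ),
      (∫ t in {t : EuclideanSpace ℝ (Fin m) | ‖t‖ < ε}, Hker m s t) ≤ F ε := by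
    intro ε hε
    rw [Set.mem_Ioi] at hε
    set B : Set (EuclideanSpace ℝ (Fin m)) := {t | ‖t‖ < ε} with hBdef
    have hBopen : IsOpen B := isOpen_lt continuous_norm continuous_const
    set g : Fin m → ℝ → ℝ :=
      fun i => (Set.Ioo (-ε) ε).indicator fun x => |x| ^ (-(cExp m s i)) with hg
    have hgint : ∀ i, Integrable (g i) := fun i =>
      integrable_indicator_abs_rpow (hc1 i) hε
    have hgnn : ∀ i x, 0 ≤ g i x := fun i x =>
      Set.indicator_nonneg (fun y _ => Real.rpow_nonneg (abs_nonneg _) _) x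
    -- the product function on the Pi type and on EuclideanSpace
    have hgPiInt : Integrable (fun x : Fin m → ℝ => ∏ i, g i (x i)) :=
      Integrable.fintype_prod fun i => hgint i
    set e := (MeasurableEquiv.toLp 2 (Fin m → ℝ)).symm with he
    have vp := EuclideanSpace.volume_preserving_symm_measurableEquiv_toLp (Fin m)
    have hgEInt : Integrable (fun t : EuclideanSpace ℝ (Fin m) => ∏ i, g i (t i)) := by
      have := (vp.integrable_comp_emb (MeasurableEquiv.measurableEmbedding e)).2 hgPiInt
      exact this
    have hgE_nonneg : ∀ t : EuclideanSpace ℝ (Fin m), 0 ≤ ∏ i, g i (t i) := fun t =>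
      Finset.prod_nonneg fun i _ => hgnn i (t i)
    -- a.e. bound on B
    have hcoords : ∀ᵐ t : EuclideanSpace ℝ (Fin m), ∀ i, t i ≠ 0 := by
      rw [MeasureTheory.ae_all_iff]
      intro i
      rw [MeasureTheory.ae_iff]
      simpa using volume_coord_zero m i
    have hae : ∀ᵐ t ∂(volume.restrict B),
        Hker m s t ≤ ∏ i, g i (t i) := by
      filter_upwards [ae_restrict_of_ae hcoords, ae_restrict_mem hBopen.measurableSet]
        with t h1 h2
      have hball : ∀ i, t i ∈ Set.Ioo (-ε) ε := by
        intro i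
        have hlt : |t i| < ε := lt_of_le_of_lt (abs_coord_le_norm t i) h2
        exact abs_lt.1 hlt
      have hgEt : ∏ i, g i (t i) = ∏ i, |t i| ^ (-(cExp m s i)) :=
        Finset.prod_congr rfl fun i _ => by
          rw [hg]; exact Set.indicator_of_mem (hball i) _
      rw [hgEt]
      exact Hker_le_prod m s hs hsm t h1
    calc (∫ t in B, Hker m s t) ≤ ∫ t in B, ∏ i, g i (t i) :=
          integral_mono_of_nonneg (Filter.Eventually.of_forall fun t => Hker_nonneg m s t)
            (hgEInt.restrict (s := B)) hae
      _ ≤ ∫ t : EuclideanSpace ℝ (Fin m), ∏ i, g i (t i) :=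
          setIntegral_le_integral hgEInt (Filter.Eventually.of_forall hgE_nonneg)
      _ = ∫ x : Fin m → ℝ, ∏ i, g i (x i) := by
          have hsymm : MeasurePreserving (⇑(e.symm)) volume volume :=
            MeasurePreserving.symm e vp
          exact (hsymm.integral_comp'
            (fun u : EuclideanSpace ℝ (Fin m) => ∏ i, g i (u i))).symm
      _ = ∏ i, ∫ x : ℝ, g i x :=
          integral_fintype_prod_eq_prod (ι := Fin m) g
      _ = F ε := by
          rw [hF]
          exact Finset.prod_congr rfl fun i _ =>
            integral_indicator_abs_rpow (hc1 i) hε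
  refine tendsto_of_tendsto_of_tendsto_of_le_of_le' tendsto_const_nhds hFlim ?_ ?_
  · exact Filter.Eventually.of_forall hlow
  · filter_upwards [self_mem_nhdsWithin] with ε hε using hup ε hε
end

section
/- Let E⁰, E¹, E² be reflexive complex Banach spaces, let S be a closed densely defined linear operator from E⁰ to E¹ and T a closed densely defined linear operator from E¹ to E², such that S(Dom S) ⊆ Dom T and T(S x) = 0 for every x ∈ Dom S. Let S′ (from (E¹)* to (E⁰)*) and T′ (from (E²)* to (E¹)*) be the transposes of S and T. Assume: (a) the range of S′ is a norm-closed subspace of (E⁰)*; and (b) every φ ∈ Dom S′ with S′φ = 0 lies in the range of T′. Then every x ∈ Dom T with T x = 0 lies in the range of S; that is, the complex E⁰ → E¹ → E² is exact at E¹. -/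
open MeasureTheory NormedSpace

theorem aux_separation {V : Type*} [NormedAddCommGroup V] [NormedSpace ℂ V]
    (M : Submodule ℂ V) (hM : IsClosed (M : Set V)) {v : V} (hv : v ∉ M) :
    ∃ f : StrongDual ℂ V, (∀ m ∈ M, f m = 0) ∧ f v ≠ 0 := by
  haveI : IsClosed (M : Set V) := hM
  let π : V →L[ℂ] (V ⧸ M) :=
    LinearMap.mkContinuous M.mkQ 1 (fun m => by
      simpa using Submodule.Quotient.norm_mk_le M m)
  have hπv : π v ≠ 0 := by
    simpa [π, Submodule.Quotient.mk_eq_zero] using hv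
  obtain ⟨g, -, hg⟩ := exists_dual_vector ℂ (π v) (norm_ne_zero_iff.mpr hπv)
  refine ⟨g.comp π, fun m hm => ?_, ?_⟩
  · have : π m = 0 := by simpa [π, Submodule.Quotient.mk_eq_zero] using hm
    simp [this]
  · simp only [ContinuousLinearMap.comp_apply, hg]
    simpa [Complex.ofReal_ne_zero] using (norm_ne_zero_iff.mpr hπv)


set_option maxHeartbeats 1000000 in
/-- Abstract duality for a complex of closed densely defined operators between reflexive
Banach spaces `E⁰ →(S) E¹ →(T) E²` with `T ∘ S = 0`.  If the range of the transpose `S′` is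
norm-closed in `(E⁰)*` and every `φ ∈ Dom S′` with `S′φ = 0` lies in the range of the transpose
`T′`, then every `x ∈ Dom T` with `T x = 0` lies in the range of `S` (exactness at `E¹`).
Membership of `ψ` in the range of `S′` is expressed by `∃ φ, ∀ x ∈ Dom S, φ (S x) = ψ x`, and
`φ ∈ Dom S′` with `S′φ = 0` by `∀ x ∈ Dom S, φ (S x) = 0` (this is equivalent since `Dom S`
is dense). -/
theorem exactness_of_dual_complex
    {E0 E1 E2 : Type*}
    [NormedAddCommGroup E0] [NormedSpace ℂ E0] [CompleteSpace E0]
    [NormedAddCommGroup E1] [NormedSpace ℂ E1] [CompleteSpace E1]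
    [NormedAddCommGroup E2] [NormedSpace ℂ E2] [CompleteSpace E2]
    (hrefl0 : Function.Surjective (inclusionInDoubleDual ℂ E0))
    (hrefl1 : Function.Surjective (inclusionInDoubleDual ℂ E1))
    (hrefl2 : Function.Surjective (inclusionInDoubleDual ℂ E2))
    (domS : Submodule ℂ E0) (S : domS →ₗ[ℂ] E1)
    (domT : Submodule ℂ E1) (T : domT →ₗ[ℂ] E2)
    (hdomS : Dense (domS : Set E0)) (hdomT : Dense (domT : Set E1))
    (hSclosed : IsClosed {q : E0 × E1 | ∃ hx : q.1 ∈ domS, S ⟨q.1, hx⟩ = q.2})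
    (hTclosed : IsClosed {q : E1 × E2 | ∃ hx : q.1 ∈ domT, T ⟨q.1, hx⟩ = q.2})
    (hST : ∀ x : domS, ∃ hx : (S x) ∈ domT, T ⟨S x, hx⟩ = 0)
    (hrangeS' : IsClosed {ψ : StrongDual ℂ E0 | ∃ φ : StrongDual ℂ E1, ∀ x : domS, φ (S x) = ψ x})
    (hkerS' : ∀ φ : StrongDual ℂ E1, (∀ x : domS, φ (S x) = 0) →
      ∃ η : StrongDual ℂ E2, ∀ y : domT, η (T y) = φ y) :
    ∀ y : domT, T y = 0 → ∃ x : domS, S x = (y : E1) := by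
  intro y hy
  have key : ∀ φ : StrongDual ℂ E1, (∀ u : domS, φ (S u) = 0) → φ y = 0 := by
    intro φ hφ
    obtain ⟨η, hη⟩ := hkerS' φ hφ
    rw [← hη y, hy, map_zero]
  have wd : ∀ φ₁ φ₂ : StrongDual ℂ E1, ∀ ψ : StrongDual ℂ E0,
      (∀ u : domS, φ₁ (S u) = ψ u) → (∀ u : domS, φ₂ (S u) = ψ u) → φ₁ y = φ₂ y := by
    intro φ₁ φ₂ ψ h₁ h₂
    have := key (φ₁ - φ₂) (fun u => by simp [h₁ u, h₂ u])
    simpa [sub_eq_zero] using this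
  -- the graph of S′
  set G : Submodule ℂ (StrongDual ℂ E1 × StrongDual ℂ E0) :=
    { carrier := {p | ∀ u : domS, p.1 (S u) = p.2 u}
      add_mem' := fun hp hq u => by simp [hp u, hq u]
      zero_mem' := fun u => by simp
      smul_mem' := fun c p hp u => by simp [hp u] } with hGdef
  have hGclosed : IsClosed (G : Set (StrongDual ℂ E1 × StrongDual ℂ E0)) := by
    have : (G : Set (StrongDual ℂ E1 × StrongDual ℂ E0)) =
        ⋂ u : domS, {p : StrongDual ℂ E1 × StrongDual ℂ E0 | p.1 (S u) = p.2 u} := by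
      ext p; simp [hGdef, Set.mem_iInter]
    rw [this]
    refine isClosed_iInter fun u => isClosed_eq ?_ ?_
    · exact (ContinuousLinearMap.apply ℂ ℂ (S u)).continuous.comp continuous_fst
    · exact (ContinuousLinearMap.apply ℂ ℂ ((u : E0))).continuous.comp continuous_snd
  -- the range of S′
  set R : Submodule ℂ (StrongDual ℂ E0) := G.map (LinearMap.snd ℂ (StrongDual ℂ E1) (StrongDual ℂ E0)) with hRdef
  have hRmem : ∀ ψ : StrongDual ℂ E0, ψ ∈ R ↔ ∃ φ : StrongDual ℂ E1, ∀ u : domS, φ (S u) = ψ u := by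
    intro ψ
    constructor
    · rintro ⟨⟨φ, ψ'⟩, hp, rfl⟩; exact ⟨φ, hp⟩
    · rintro ⟨φ, hφ⟩; exact ⟨(φ, ψ), hφ, rfl⟩
  have hRclosed : IsClosed (R : Set (StrongDual ℂ E0)) := by
    have : (R : Set (StrongDual ℂ E0)) =
        {ψ : StrongDual ℂ E0 | ∃ φ : StrongDual ℂ E1, ∀ x : domS, φ (S x) = ψ x} := by
      ext ψ; exact hRmem ψ
    rw [this]; exact hrangeS'
  haveI : CompleteSpace G := hGclosed.completeSpace_coe
  haveI : CompleteSpace R := hRclosed.completeSpace_coe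
  -- projection G → R, surjective
  let p : G →L[ℂ] R :=
    LinearMap.mkContinuous
      { toFun := fun (q : G) => (⟨(q : StrongDual ℂ E1 × StrongDual ℂ E0).2, ⟨q, q.2, rfl⟩⟩ : R)
        map_add' := fun q₁ q₂ => rfl
        map_smul' := fun c q => rfl } 1
      (fun q => by simpa using norm_snd_le (q : StrongDual ℂ E1 × StrongDual ℂ E0))
  have hpsurj : Function.Surjective p := by
    rintro ⟨ψ, hψ⟩
    obtain ⟨q, hq, hq2⟩ := hψ
    exact ⟨⟨q, hq⟩, Subtype.ext hq2⟩
  obtain ⟨C, hCpos, hC⟩ := p.exists_preimage_norm_le (𝕜 := ℂ) (𝕜' := ℂ) (σ := RingHom.id ℂ) (E := G) (F := R) hpsurj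
  choose pre hpre hprenorm using hC
  have hpre2 : ∀ ψ : R, ((pre ψ : StrongDual ℂ E1 × StrongDual ℂ E0).2) = (ψ : StrongDual ℂ E0) :=
    fun ψ => congrArg Subtype.val (hpre ψ)
  have hpreG : ∀ ψ : R, ∀ u : domS,
      (pre ψ : StrongDual ℂ E1 × StrongDual ℂ E0).1 (S u) = (ψ : StrongDual ℂ E0) u := by
    intro ψ u
    have hmem := (pre ψ).2
    rw [← hpre2 ψ]
    exact hmem u
  -- the functional on R
  let ℓ₀ : R → ℂ := fun ψ => (pre ψ : StrongDual ℂ E1 × StrongDual ℂ E0).1 y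
  have hℓ₀ : ∀ (ψ : R) (φ : StrongDual ℂ E1),
      (∀ u : domS, φ (S u) = (ψ : StrongDual ℂ E0) u) → ℓ₀ ψ = φ y :=
    fun ψ φ hφ => wd _ φ _ (hpreG ψ) hφ
  have hadd : ∀ ψ₁ ψ₂ : R, ℓ₀ (ψ₁ + ψ₂) = ℓ₀ ψ₁ + ℓ₀ ψ₂ := by
    intro ψ₁ ψ₂
    have h := hℓ₀ (ψ₁ + ψ₂)
      ((pre ψ₁ : StrongDual ℂ E1 × StrongDual ℂ E0).1 + (pre ψ₂ : StrongDual ℂ E1 × StrongDual ℂ E0).1)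
      (fun u => by
        simp only [ContinuousLinearMap.add_apply, Submodule.coe_add,
          hpreG ψ₁ u, hpreG ψ₂ u])
    simpa [ℓ₀] using h
  have hsmul : ∀ (c : ℂ) (ψ : R), ℓ₀ (c • ψ) = c • ℓ₀ ψ := by
    intro c ψ
    have h := hℓ₀ (c • ψ) (c • (pre ψ : StrongDual ℂ E1 × StrongDual ℂ E0).1)
      (fun u => by
        simp only [ContinuousLinearMap.smul_apply, Submodule.coe_smul, hpreG ψ u])
    simpa [ℓ₀] using h
  let ℓ : R →L[ℂ] ℂ :=
    LinearMap.mkContinuous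
      { toFun := ℓ₀
        map_add' := hadd
        map_smul' := hsmul } (C * ‖(y : E1)‖)
      (fun ψ => by
        calc ‖(pre ψ : StrongDual ℂ E1 × StrongDual ℂ E0).1 ((y : E1))‖
            ≤ ‖(pre ψ : StrongDual ℂ E1 × StrongDual ℂ E0).1‖ * ‖(y : E1)‖ :=
              ContinuousLinearMap.le_opNorm _ _
          _ ≤ ‖(pre ψ : StrongDual ℂ E1 × StrongDual ℂ E0)‖ * ‖(y : E1)‖ := by
              gcongr; exact norm_fst_le _
          _ ≤ (C * ‖ψ‖) * ‖(y : E1)‖ := by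
              gcongr; exact hprenorm ψ
          _ = (C * ‖(y : E1)‖) * ‖ψ‖ := by ring)
  obtain ⟨Λ, hΛext, -⟩ := exists_extension_norm_eq R ℓ
  obtain ⟨x, hx⟩ := hrefl0 Λ
  have hxψ : ∀ ψ : StrongDual ℂ E0, ψ x = Λ ψ := by
    intro ψ
    rw [← hx]; rfl
  -- main relation
  have main : ∀ (φ : StrongDual ℂ E1) (ψ : StrongDual ℂ E0),
      (∀ u : domS, φ (S u) = ψ u) → ψ x = φ y := by
    intro φ ψ hφψ
    have hψR : ψ ∈ R := (hRmem ψ).2 ⟨φ, hφψ⟩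
    have h1 : ψ x = ℓ ⟨ψ, hψR⟩ := (hxψ ψ).trans (hΛext ⟨ψ, hψR⟩)
    exact h1.trans (hℓ₀ ⟨ψ, hψR⟩ φ hφψ)
  -- the graph of S as a submodule
  set M : Submodule ℂ (E0 × E1) := LinearMap.range ((domS.subtype).prod S) with hMdef
  have hMset : (M : Set (E0 × E1)) = {q : E0 × E1 | ∃ hx : q.1 ∈ domS, S ⟨q.1, hx⟩ = q.2} := by
    ext q
    constructor
    · rintro ⟨u, rfl⟩
      exact ⟨u.2, by simp⟩
    · rintro ⟨hq1, hq2⟩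
      exact ⟨⟨q.1, hq1⟩, by simp [hq2]⟩
  have hMclosed : IsClosed (M : Set (E0 × E1)) := by rw [hMset]; exact hSclosed
  have hxyM : (x, (y : E1)) ∈ M := by
    by_contra hxy
    obtain ⟨f, hf0, hfne⟩ := aux_separation M hMclosed hxy
    let ψf : StrongDual ℂ E0 := f.comp (ContinuousLinearMap.inl ℂ E0 E1)
    let φf : StrongDual ℂ E1 := f.comp (ContinuousLinearMap.inr ℂ E0 E1)
    have hsplit : ∀ q : E0 × E1, f q = ψf q.1 + φf q.2 := by
      intro q
      have h : q = (q.1, 0) + (0, q.2) := by simp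
      conv_lhs => rw [h, map_add]
      rfl
    have hrel : ∀ u : domS, φf (S u) = (-ψf) u := by
      intro u
      have hm : ((u : E0), S u) ∈ M := ⟨u, rfl⟩
      have h := hf0 _ hm
      rw [hsplit] at h
      simp only [ContinuousLinearMap.neg_apply]
      linear_combination h
    have hmr := main φf (-ψf) hrel
    apply hfne
    rw [hsplit]
    simp only [ContinuousLinearMap.neg_apply] at hmr
    rw [← hmr]
    ring
  obtain ⟨u, hu⟩ := hxyM
  exact ⟨u, congrArg Prod.snd hu⟩
end
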